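/- In the binary-sensing model, the mean squared error of each coefficient estimate satisfies E[|α̂_j − α_j|²] ≤ (c²/n) ∫_D |φ_j(x)|² / p_X(x) dx for every j. -/

import Mathlib

open MeasureTheory ProbabilityTheory Filter
open scoped ENNReal Topology

noncomputable section

/-- Sign function: `+1` if `u > 0` and `-1` otherwise. -/
def sgn' (u : ℝ) : ℝ := if 0 < u then 1 else -1

/-- Binary-quantized observation of sensor `i`: `B i = sgn (f (X i) + Z i - T i)`. -/
def obsB {E Ω : Type*} (f : E → ℝ) (X : ℕ → Ω → E) (Z T : ℕ → Ω → ℝ)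
    (i : ℕ) (ω : Ω) : ℝ :=
  sgn' (f (X i ω) + Z i ω - T i ω)

/-- Estimate of the `j`-th coefficient from the first `n` sensors:
`α̂_j = (c/n) ∑_{i<n} (φ_j(X_i))^* / p_X(X_i) * B_i`. -/
def alphaHat {E Ω : Type*} (c : ℝ) (pX : E → ℝ) (φ : ℕ → E → ℂ) (f : E → ℝ)
    (X : ℕ → Ω → E) (Z T : ℕ → Ω → ℝ) (n j : ℕ) (ω : Ω) : ℂ :=
  ((c : ℂ) / (n : ℂ)) * ∑ i ∈ Finset.range n,
    (starRingEnd ℂ) (φ j (X i ω)) / (pX (X i ω) : ℂ) * (obsB f X Z T i ω : ℂ)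

/-- The `j`-th coefficient of the field `f`: `α_j = ⟨f, φ_j⟩ = ∫_D f (φ_j)^*`. -/
def coeff {E : Type*} [MeasureSpace E] (D : Set E) (f : E → ℝ) (φ : ℕ → E → ℂ)
    (j : ℕ) : ℂ :=
  ∫ x in D, (f x : ℂ) * (starRingEnd ℂ) (φ j x)

/-- The `m`-term field estimate `f̂_{n,m} = ∑_{j<m} α̂_j φ_j`. -/
def fieldEst {E Ω : Type*} (c : ℝ) (pX : E → ℝ) (φ : ℕ → E → ℂ) (f : E → ℝ)
    (X : ℕ → Ω → E) (Z T : ℕ → Ω → ℝ) (n m : ℕ) (x : E) (ω : Ω) : ℂ :=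
  ∑ j ∈ Finset.range m, alphaHat c pX φ f X Z T n j ω * φ j x

/-- The `m`-term approximation `f_m = ∑_{j<m} α_j φ_j`. -/
def mApprox {E : Type*} [MeasureSpace E] (D : Set E) (f : E → ℝ) (φ : ℕ → E → ℂ)
    (m : ℕ) (x : E) : ℂ :=
  ∑ j ∈ Finset.range m, coeff D f φ j * φ j x

/-- The integrated mean squared error `E[‖f - f̂_{n,m}‖²]`. -/
def intMSE {E Ω : Type*} [MeasureSpace E] [MeasurableSpace Ω] (P : Measure Ω)
    (D : Set E) (c : ℝ) (pX : E → ℝ) (φ : ℕ → E → ℂ) (f : E → ℝ)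
    (X : ℕ → Ω → E) (Z T : ℕ → Ω → ℝ) (n m : ℕ) : ℝ :=
  ∫ ω, (∫ x in D, ‖(f x : ℂ) - fieldEst c pX φ f X Z T n m x ω‖ ^ 2) ∂P

/-- The `m`-term approximation error `ε[f,m] = ∑_{j≥m} |α_j|²`. -/
def tailErr {E : Type*} [MeasureSpace E] (D : Set E) (f : E → ℝ) (φ : ℕ → E → ℂ)
    (m : ℕ) : ℝ :=
  ∑' j : ℕ, ‖coeff D f φ (m + j)‖ ^ 2

/-- The deployment distribution: density `p_X` (w.r.t. Lebesgue measure) on `D`. -/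
def deployLaw {E : Type*} [MeasureSpace E] (D : Set E) (pX : E → ℝ) : Measure E :=
  (volume.restrict D).withDensity fun x => ENNReal.ofReal (pX x)

/-- The threshold distribution: uniform on `[-c, c]`. -/
def threshLaw (c : ℝ) : Measure ℝ :=
  (ENNReal.ofReal (1 / (2 * c))) • volume.restrict (Set.Icc (-c) c)

end

/- ### Auxiliary lemmas -/

lemma measurable_sgn' : Measurable sgn' :=
  Measurable.ite (measurableSet_lt measurable_const measurable_id) measurable_const
    measurable_const

lemma abs_sgn' (u : ℝ) : |sgn' u| = 1 := by
  unfold sgn'; split <;> norm_num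

lemma isProbabilityMeasure_threshLaw {c : ℝ} (hc : 0 < c) :
    IsProbabilityMeasure (threshLaw c) := by
  constructor
  rw [threshLaw, Measure.smul_apply, Measure.restrict_apply_univ, Real.volume_Icc,
    smul_eq_mul, ← ENNReal.ofReal_mul (by positivity), ← ENNReal.ofReal_one]
  congr 1
  field_simp
  ring

lemma sgn'_integral_uniform {c : ℝ} (hc : 0 < c) {u : ℝ} (hu : u ∈ Set.Icc (-c) c) :
    ∫ t, sgn' (u - t) ∂(threshLaw c) = u / c := by
  have hmeas : Measurable fun t : ℝ => sgn' (u - t) :=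
    measurable_sgn'.comp (measurable_const.sub measurable_id)
  have hint : ∀ s : Set ℝ, volume s < ⊤ → IntegrableOn (fun t => sgn' (u - t)) s volume := by
    intro s hs
    refine Integrable.mono' (g := fun _ => (1 : ℝ)) (integrableOn_const hs.ne)
      hmeas.aestronglyMeasurable ?_
    exact .of_forall fun t => by rw [Real.norm_eq_abs, abs_sgn']
  have hsplit : Set.Ico (-c) u ∪ Set.Icc u c = Set.Icc (-c) c :=
    Set.Ico_union_Icc_eq_Icc hu.1 hu.2
  have hdisj : Disjoint (Set.Ico (-c) u) (Set.Icc u c) := by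
    rw [Set.disjoint_left]
    rintro t ⟨-, h1⟩ ⟨h2, -⟩; exact absurd h2 (not_le.2 h1)
  have h1 : ∫ t in Set.Ico (-c) u, sgn' (u - t) = u + c := by
    rw [setIntegral_congr_fun measurableSet_Ico
      (fun t ht => by simp only [sgn', if_pos (sub_pos.2 ht.2)] : Set.EqOn _ (fun _ => (1:ℝ)) _),
      setIntegral_const, measureReal_def, Real.volume_Ico, ENNReal.toReal_ofReal (by linarith [hu.1]),
      smul_eq_mul, mul_one]
    ring
  have h2 : ∫ t in Set.Icc u c, sgn' (u - t) = -(c - u) := by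
    rw [setIntegral_congr_fun measurableSet_Icc
      (fun t ht => by simp only [sgn', if_neg (not_lt.2 (sub_nonpos.2 ht.1))] :
        Set.EqOn _ (fun _ => (-1:ℝ)) _),
      setIntegral_const, measureReal_def, Real.volume_Icc, ENNReal.toReal_ofReal (by linarith [hu.2]),
      smul_eq_mul]
    ring
  have hvol : ∀ x y : ℝ, volume (Set.Ico x y) < ⊤ := fun x y => by
    rw [Real.volume_Ico]; exact ENNReal.ofReal_lt_top
  have hvol2 : ∀ x y : ℝ, volume (Set.Icc x y) < ⊤ := fun x y => by
    rw [Real.volume_Icc]; exact ENNReal.ofReal_lt_top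
  rw [threshLaw, integral_smul_measure, ENNReal.toReal_ofReal (by positivity),
    ← hsplit, setIntegral_union hdisj measurableSet_Icc (hint _ (hvol _ _)) (hint _ (hvol2 _ _)),
    h1, h2, smul_eq_mul]
  field_simp
  ring

lemma sgn'_integral_zt {a b c : ℝ} (ha : 0 ≤ a) (hb : 0 < b) (hc : c = a + b)
    (μZ : Measure ℝ) [IsProbabilityMeasure μZ]
    (hZmean : (∫ z, z ∂μZ) = 0) (hZsupp : μZ (Set.Icc (-b) b)ᶜ = 0) {s : ℝ}
    (hs : s ∈ Set.Icc (-a) a) :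
    ∫ w : ℝ × ℝ, sgn' (s + w.1 - w.2) ∂(μZ.prod (threshLaw c)) = s / c := by
  have hc0 : 0 < c := by rw [hc]; linarith
  haveI := isProbabilityMeasure_threshLaw hc0
  have hZae : ∀ᵐ z ∂μZ, z ∈ Set.Icc (-b) b := by
    rw [ae_iff]
    convert hZsupp using 2
    rfl
  have hmeas : Measurable fun w : ℝ × ℝ => sgn' (s + w.1 - w.2) :=
    measurable_sgn'.comp ((measurable_const.add measurable_fst).sub measurable_snd)
  have hint : Integrable (fun w : ℝ × ℝ => sgn' (s + w.1 - w.2)) (μZ.prod (threshLaw c)) := by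
    refine Integrable.mono' (g := fun _ => (1:ℝ)) (integrable_const 1)
      hmeas.aestronglyMeasurable (.of_forall fun w => by rw [Real.norm_eq_abs, abs_sgn'])
  rw [MeasureTheory.integral_prod _ hint]
  have hinner : ∀ᵐ z ∂μZ, (∫ t, sgn' (s + z - t) ∂(threshLaw c)) = (s + z) / c := by
    filter_upwards [hZae] with z hz
    exact sgn'_integral_uniform hc0
      ⟨by cases hs; cases hz; linarith, by cases hs; cases hz; linarith⟩
  rw [integral_congr_ae hinner]
  have hzint : Integrable (fun z : ℝ => z) μZ := by
    refine Integrable.mono' (g := fun _ => b) (integrable_const b)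
      measurable_id.aestronglyMeasurable ?_
    filter_upwards [hZae] with z hz
    rw [Real.norm_eq_abs, abs_le]; exact ⟨hz.1, hz.2⟩
  have : (fun z : ℝ => (s + z) / c) = fun z => s / c + z / c := by funext z; ring
  rw [this, integral_add (integrable_const _) (hzint.div_const c), integral_const,
    integral_div, hZmean, probReal_univ, smul_eq_mul, one_mul]
  simp

section DeployLaw
variable {E : Type*} [MeasureSpace E] {D : Set E} {pX : E → ℝ}
  {G : Type*} [NormedAddCommGroup G] [NormedSpace ℝ G]

lemma deployLaw_eq : deployLaw D pX
    = (volume.restrict D).withDensity fun x => ((pX x).toNNReal : ℝ≥0∞) := by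
  simp only [deployLaw, ENNReal.ofReal]

lemma deployLaw_integral (hpX : Measurable pX) (F : E → G) :
    ∫ x, F x ∂(deployLaw D pX) = ∫ x in D, (pX x).toNNReal • F x := by
  rw [deployLaw_eq]
  exact integral_withDensity_eq_integral_smul hpX.real_toNNReal F

lemma deployLaw_integrable_iff (hpX : Measurable pX) (F : E → ℝ) :
    Integrable F (deployLaw D pX) ↔
      Integrable (fun x => F x * (ENNReal.ofReal (pX x)).toReal) (volume.restrict D) := by
  rw [deployLaw]
  exact integrable_withDensity_iff (hpX.ennreal_ofReal)
    (.of_forall fun x => ENNReal.ofReal_lt_top)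

lemma deployLaw_ae_mem (hD : MeasurableSet D) : ∀ᵐ x ∂(deployLaw D pX), x ∈ D := by
  rw [ae_iff]
  have : {x | ¬ x ∈ D} = Dᶜ := rfl
  rw [this, deployLaw, withDensity_apply _ hD.compl, Measure.restrict_restrict hD.compl]
  simp

lemma deployLaw_isProbability (hD : MeasurableSet D)
    (hpXpos : ∀ x ∈ D, 0 < pX x) (hpXone : (∫ x in D, pX x) = 1) :
    IsProbabilityMeasure (deployLaw D pX) := by
  have hintp : Integrable pX (volume.restrict D) := by
    by_contra h
    rw [integral_undef h] at hpXone
    norm_num at hpXone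
  have hnn : 0 ≤ᵐ[volume.restrict D] pX :=
    (ae_restrict_iff' hD).2 (.of_forall fun x hx => (hpXpos x hx).le)
  constructor
  rw [deployLaw, withDensity_apply _ MeasurableSet.univ, Measure.restrict_univ,
    ← ofReal_integral_eq_lintegral_ofReal hintp hnn, hpXone, ENNReal.ofReal_one]

end DeployLaw

section FstProd
variable {α β : Type*} [MeasurableSpace α] [MeasurableSpace β]
  {ν : Measure α} {ρ : Measure β} [SFinite ν] [IsProbabilityMeasure ρ]
  {G : Type*} [NormedAddCommGroup G] [NormedSpace ℝ G]

lemma map_fst_prod_prob : Measure.map Prod.fst (ν.prod ρ) = ν := by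
  rw [Measure.map_fst_prod, measure_univ, one_smul]

lemma integral_fst_prod {F : α → G} (hF : AEStronglyMeasurable F ν) :
    ∫ q, F q.1 ∂(ν.prod ρ) = ∫ x, F x ∂ν := by
  have hmap : Measure.map Prod.fst (ν.prod ρ) = ν := map_fst_prod_prob
  have h2 := integral_map (f := F) measurable_fst.aemeasurable (hmap.symm ▸ hF)
  rw [hmap] at h2
  exact h2.symm

lemma integrable_fst_prod {F : α → ℝ} (hF : Integrable F ν) :
    Integrable (fun q : α × β => F q.1) (ν.prod ρ) := by
  have hmap : Measure.map Prod.fst (ν.prod ρ) = ν := map_fst_prod_prob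
  exact (integrable_map_measure (hmap.symm ▸ hF.aestronglyMeasurable)
    measurable_fst.aemeasurable).1 (hmap.symm ▸ hF)

lemma ae_fst_prod {s : Set α} (hs : MeasurableSet s) (h : ∀ᵐ x ∂ν, x ∈ s) :
    ∀ᵐ q ∂(ν.prod ρ), q.1 ∈ s := by
  rw [← map_fst_prod_prob (ν := ν) (ρ := ρ)] at h
  exact (ae_map_iff measurable_fst.aemeasurable hs).1 h

end FstProd

/-- **Variance bound for the coefficient estimates.**
`E[|α̂_j − α_j|²] ≤ (c²/n) ∫_D |φ_j|²/p_X`. -/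
theorem stmt2
    {d : ℕ} {D : Set (Fin d → ℝ)} (hDcomp : IsCompact D)
    (hDpos : 0 < volume D) (hDfin : volume D < ⊤)
    {a b c : ℝ} (ha : 0 < a) (hb : 0 < b) (hc : c = a + b)
    {f : (Fin d → ℝ) → ℝ} (hfmeas : Measurable f)
    (hfbd : ∀ x ∈ D, f x ∈ Set.Icc (-a) a)
    {pX : (Fin d → ℝ) → ℝ} (hpXmeas : Measurable pX)
    (hpXpos : ∀ x ∈ D, 0 < pX x) (hpXone : (∫ x in D, pX x) = 1)
    {φ : ℕ → (Fin d → ℝ) → ℂ} (hφmeas : ∀ j, Measurable (φ j))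
    (hφL2 : ∀ j, MemLp (φ j) 2 (volume.restrict D))
    (hON : ∀ j k, (∫ x in D, φ j x * (starRingEnd ℂ) (φ k x)) = if j = k then 1 else 0)
    (hComplete : ∀ g : (Fin d → ℝ) → ℂ, Measurable g → MemLp g 2 (volume.restrict D) →
      (∑' j : ℕ, ‖∫ x in D, g x * (starRingEnd ℂ) (φ j x)‖ ^ 2) = ∫ x in D, ‖g x‖ ^ 2)
    {Ω : Type*} [MeasurableSpace Ω] (P : Measure Ω) [IsProbabilityMeasure P]
    (X : ℕ → Ω → (Fin d → ℝ)) (Z T : ℕ → Ω → ℝ)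
    (hXmeas : ∀ i, Measurable (X i)) (hZmeas : ∀ i, Measurable (Z i))
    (hTmeas : ∀ i, Measurable (T i))
    (μZ : Measure ℝ) [IsProbabilityMeasure μZ]
    (hZmean : (∫ z, z ∂μZ) = 0) (hZsupp : μZ (Set.Icc (-b) b)ᶜ = 0)
    (hlaw : ∀ i, Measure.map (fun ω => (X i ω, Z i ω, T i ω)) P =
      (deployLaw D pX).prod (μZ.prod (threshLaw c)))
    (hiid : iIndepFun (fun i ω => (X i ω, Z i ω, T i ω)) P)
    (hInt : ∀ j, Integrable (fun x => ‖φ j x‖ ^ 2 / pX x) (volume.restrict D))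
    (n : ℕ) (hn : 0 < n) :
    ∀ j : ℕ, (∫ ω, ‖alphaHat c pX φ f X Z T n j ω - coeff D f φ j‖ ^ 2 ∂P)
      ≤ c ^ 2 / n * ∫ x in D, ‖φ j x‖ ^ 2 / pX x := by
  intro j
  have hc0 : 0 < c := by rw [hc]; linarith
  have hDm : MeasurableSet D := hDcomp.isClosed.measurableSet
  haveI : IsFiniteMeasure (volume.restrict D) :=
    ⟨by rw [Measure.restrict_apply_univ]; exact hDfin⟩
  haveI hνP : IsProbabilityMeasure (deployLaw D pX) :=
    deployLaw_isProbability hDm hpXpos hpXone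
  haveI := isProbabilityMeasure_threshLaw hc0
  set I : ℝ := ∫ x in D, ‖φ j x‖ ^ 2 / pX x with hI
  set ν : Measure (Fin d → ℝ) := deployLaw D pX with hν
  set ρ : Measure (ℝ × ℝ) := μZ.prod (threshLaw c) with hρ
  set μ : Measure ((Fin d → ℝ) × ℝ × ℝ) := ν.prod ρ with hμ
  haveI : IsProbabilityMeasure ρ :=
    show IsProbabilityMeasure (μZ.prod (threshLaw c)) from inferInstance
  haveI : IsProbabilityMeasure μ :=
    show IsProbabilityMeasure (ν.prod ρ) from inferInstance
  set g : (Fin d → ℝ) × ℝ × ℝ → ℂ := fun q =>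
    (c : ℂ) * (starRingEnd ℂ) (φ j q.1) / (pX q.1 : ℂ)
      * (sgn' (f q.1 + q.2.1 - q.2.2) : ℂ) with hgdef
  have hgmeas : Measurable g := by
    apply Measurable.mul
    · apply Measurable.div
      · exact measurable_const.mul
          (Complex.continuous_conj.measurable.comp ((hφmeas j).comp measurable_fst))
      · exact Complex.measurable_ofReal.comp (hpXmeas.comp measurable_fst)
    · exact Complex.measurable_ofReal.comp (measurable_sgn'.comp
        (((hfmeas.comp measurable_fst).add (measurable_fst.comp measurable_snd)).sub
          (measurable_snd.comp measurable_snd)))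
  -- pointwise norm computations
  have hnormg2 : ∀ q, ‖g q‖ ^ 2 = c ^ 2 * (‖φ j q.1‖ ^ 2 / (pX q.1) ^ 2) := by
    intro q
    rw [hgdef]
    simp only [norm_mul, norm_div, Complex.norm_real, RCLike.norm_conj,
      Real.norm_eq_abs, abs_sgn', abs_of_pos hc0, mul_one]
    rw [div_pow, mul_pow, sq_abs]
    ring
  set H : (Fin d → ℝ) → ℝ := fun x => c ^ 2 * (‖φ j x‖ ^ 2 / (pX x) ^ 2) with hHdef
  have hHmeas : Measurable H := by
    apply measurable_const.mul
    exact ((hφmeas j).norm.pow measurable_const).div (hpXmeas.pow measurable_const)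
  -- the second moment over μ
  have hHint : Integrable H ν := by
    rw [hν, deployLaw_integrable_iff hpXmeas]
    refine ((hInt j).const_mul (c ^ 2)).congr ?_
    refine (ae_restrict_iff' hDm).2 (.of_forall fun x hx => ?_)
    have hp := hpXpos x hx
    show c ^ 2 * (‖φ j x‖ ^ 2 / pX x) = H x * (ENNReal.ofReal (pX x)).toReal
    rw [ENNReal.toReal_ofReal hp.le, hHdef]
    field_simp
  have hint_gsq : (∫ q, ‖g q‖ ^ 2 ∂μ) = c ^ 2 * I := by
    have h0 : (fun q : (Fin d → ℝ) × ℝ × ℝ => ‖g q‖ ^ 2) = fun q => H q.1 :=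
      funext fun q => hnormg2 q
    rw [h0, hμ, integral_fst_prod hHmeas.aestronglyMeasurable, hν,
      deployLaw_integral hpXmeas]
    rw [setIntegral_congr_fun hDm (g := fun x => c ^ 2 * (‖φ j x‖ ^ 2 / pX x))
      (fun x hx => by
        have hp := hpXpos x hx
        rw [NNReal.smul_def, Real.coe_toNNReal _ hp.le, smul_eq_mul, hHdef]
        field_simp)]
    rw [hI, integral_const_mul]
  have hIntgsq : Integrable (fun q => ‖g q‖ ^ 2) μ := by
    have h0 : (fun q : (Fin d → ℝ) × ℝ × ℝ => ‖g q‖ ^ 2) = fun q => H q.1 :=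
      funext fun q => hnormg2 q
    rw [h0, hμ]
    exact integrable_fst_prod hHint
  have hg2 : MemLp g 2 μ :=
    (memLp_two_iff_integrable_sq_norm hgmeas.aestronglyMeasurable).2 hIntgsq
  have hgInt : Integrable g μ := hg2.integrable one_le_two
  -- the mean over μ
  have hgmean : (∫ q, g q ∂μ) = coeff D f φ j := by
    rw [hμ, hν, MeasureTheory.integral_prod _ (by rw [hμ, hν] at hgInt; exact hgInt),
      deployLaw_integral hpXmeas, coeff]
    refine setIntegral_congr_fun hDm fun x hx => ?_
    have hp := hpXpos x hx
    have hinner : (∫ w : ℝ × ℝ, g (x, w) ∂ρ)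
        = (c : ℂ) * (starRingEnd ℂ) (φ j x) / (pX x : ℂ) * ((f x / c : ℝ) : ℂ) := by
      have h1 : (fun w : ℝ × ℝ => g (x, w)) = fun w =>
          (c : ℂ) * (starRingEnd ℂ) (φ j x) / (pX x : ℂ)
            * ((sgn' (f x + w.1 - w.2) : ℝ) : ℂ) := rfl
      rw [h1, integral_const_mul, hρ]
      congr 1
      rw [← sgn'_integral_zt ha.le hb hc μZ hZmean hZsupp (hfbd x hx)]
      exact integral_ofReal
    rw [hinner]
    have hpc : (pX x : ℂ) ≠ 0 := by
      exact_mod_cast hp.ne'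
    have hcc : (c : ℂ) ≠ 0 := by exact_mod_cast hc0.ne'
    rw [NNReal.smul_def, Real.coe_toNNReal _ hp.le]
    rw [Complex.real_smul]
    push_cast
    field_simp
  -- per-sensor random variables
  set Y : ℕ → Ω → ℂ := fun i ω => g (X i ω, Z i ω, T i ω) with hYdef
  have htm : ∀ i, Measurable fun ω => (X i ω, Z i ω, T i ω) := fun i =>
    (hXmeas i).prodMk ((hZmeas i).prodMk (hTmeas i))
  have hYmean : ∀ i, (∫ ω, Y i ω ∂P) = coeff D f φ j := by
    intro i
    have h1 := integral_map (htm i).aemeasurable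
      ((hlaw i).symm ▸ hgmeas.aestronglyMeasurable :
        AEStronglyMeasurable g (Measure.map (fun ω => (X i ω, Z i ω, T i ω)) P))
    rw [hlaw i] at h1
    exact h1.symm.trans hgmean
  have hYsq : ∀ i, (∫ ω, ‖Y i ω‖ ^ 2 ∂P) = c ^ 2 * I := by
    intro i
    have h1 := integral_map (htm i).aemeasurable
      ((hlaw i).symm ▸ (hgmeas.norm.pow measurable_const).aestronglyMeasurable :
        AEStronglyMeasurable (fun q => ‖g q‖ ^ 2)
          (Measure.map (fun ω => (X i ω, Z i ω, T i ω)) P))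
    rw [hlaw i] at h1
    exact h1.symm.trans hint_gsq
  have hY2 : ∀ i, MemLp (Y i) 2 P := by
    intro i
    exact (memLp_map_measure_iff
      ((hlaw i).symm ▸ hgmeas.aestronglyMeasurable :
        AEStronglyMeasurable g (Measure.map (fun ω => (X i ω, Z i ω, T i ω)) P))
      (htm i).aemeasurable).1
      ((hlaw i).symm ▸ hg2 :
        MemLp g 2 (Measure.map (fun ω => (X i ω, Z i ω, T i ω)) P))
  set U : ℕ → Ω → ℝ := fun i ω => (Y i ω).re with hUdef
  set V : ℕ → Ω → ℝ := fun i ω => (Y i ω).im with hVdef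
  have hU2 : ∀ i, MemLp (U i) 2 P := fun i => (hY2 i).re
  have hV2 : ∀ i, MemLp (V i) 2 P := fun i => (hY2 i).im
  have hUind : iIndepFun U P :=
    hiid.comp (fun _ q => (g q).re) (fun _ => Complex.measurable_re.comp hgmeas)
  have hVind : iIndepFun V P :=
    hiid.comp (fun _ q => (g q).im) (fun _ => Complex.measurable_im.comp hgmeas)
  have hUmean : ∀ i, (∫ ω, U i ω ∂P) = (coeff D f φ j).re := by
    intro i
    have h := integral_re ((hY2 i).integrable one_le_two)
    rw [hYmean i] at h
    exact h
  have hVmean : ∀ i, (∫ ω, V i ω ∂P) = (coeff D f φ j).im := by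
    intro i
    have h := integral_im ((hY2 i).integrable one_le_two)
    rw [hYmean i] at h
    exact h
  set SU : Ω → ℝ := ∑ i ∈ Finset.range n, U i with hSUdef
  set SV : Ω → ℝ := ∑ i ∈ Finset.range n, V i with hSVdef
  have hSU2 : MemLp SU 2 P := memLp_finset_sum' _ fun i _ => hU2 i
  have hSV2 : MemLp SV 2 P := memLp_finset_sum' _ fun i _ => hV2 i
  have hSUapp : ∀ ω, SU ω = ∑ i ∈ Finset.range n, (Y i ω).re := by
    intro ω; rw [hSUdef]; rw [Finset.sum_apply]
  have hSVapp : ∀ ω, SV ω = ∑ i ∈ Finset.range n, (Y i ω).im := by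
    intro ω; rw [hSVdef]; rw [Finset.sum_apply]
  have hSUmean : (∫ ω, SU ω ∂P) = n * (coeff D f φ j).re := by
    have h1 : (∫ ω, SU ω ∂P) = ∑ i ∈ Finset.range n, ∫ ω, U i ω ∂P := by
      rw [show (fun ω => SU ω) = fun ω => ∑ i ∈ Finset.range n, U i ω from
        funext fun ω => by rw [hSUdef]; rw [Finset.sum_apply]]
      exact integral_finset_sum _ fun i _ => (hU2 i).integrable one_le_two
    rw [h1]
    simp only [hUmean]
    rw [Finset.sum_const, Finset.card_range, nsmul_eq_mul]
  have hSVmean : (∫ ω, SV ω ∂P) = n * (coeff D f φ j).im := by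
    have h1 : (∫ ω, SV ω ∂P) = ∑ i ∈ Finset.range n, ∫ ω, V i ω ∂P := by
      rw [show (fun ω => SV ω) = fun ω => ∑ i ∈ Finset.range n, V i ω from
        funext fun ω => by rw [hSVdef]; rw [Finset.sum_apply]]
      exact integral_finset_sum _ fun i _ => (hV2 i).integrable one_le_two
    rw [h1]
    simp only [hVmean]
    rw [Finset.sum_const, Finset.card_range, nsmul_eq_mul]
  have hvarU : variance SU P = ∑ i ∈ Finset.range n, variance (U i) P := by
    rw [hSUdef]
    exact IndepFun.variance_sum (fun i _ => hU2 i)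
      (fun i _ k _ hik => hUind.indepFun hik)
  have hvarV : variance SV P = ∑ i ∈ Finset.range n, variance (V i) P := by
    rw [hSVdef]
    exact IndepFun.variance_sum (fun i _ => hV2 i)
      (fun i _ k _ hik => hVind.indepFun hik)
  have hvar_eqU : (∫ ω, (SU ω - n * (coeff D f φ j).re) ^ 2 ∂P) = variance SU P := by
    have h := variance_eq_integral hSU2.aestronglyMeasurable.aemeasurable
    rw [hSUmean] at h
    rw [h]
  have hvar_eqV : (∫ ω, (SV ω - n * (coeff D f φ j).im) ^ 2 ∂P) = variance SV P := by
    have h := variance_eq_integral hSV2.aestronglyMeasurable.aemeasurable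
    rw [hSVmean] at h
    rw [h]
  have hvar_le : ∀ i, variance (U i) P + variance (V i) P ≤ c ^ 2 * I := by
    intro i
    have h1 : variance (U i) P ≤ ∫ ω, (U i ω) ^ 2 ∂P := by
      have := variance_le_expectation_sq (hU2 i).aestronglyMeasurable
      simpa only [Pi.pow_apply] using this
    have h2 : variance (V i) P ≤ ∫ ω, (V i ω) ^ 2 ∂P := by
      have := variance_le_expectation_sq (hV2 i).aestronglyMeasurable
      simpa only [Pi.pow_apply] using this
    have h3 : (∫ ω, (U i ω) ^ 2 ∂P) + (∫ ω, (V i ω) ^ 2 ∂P) = c ^ 2 * I := by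
      rw [← integral_add (hU2 i).integrable_sq (hV2 i).integrable_sq, ← hYsq i]
      refine integral_congr_ae (.of_forall fun ω => ?_)
      show (Y i ω).re ^ 2 + (Y i ω).im ^ 2 = ‖Y i ω‖ ^ 2
      rw [Complex.sq_norm, Complex.normSq_apply]
      ring
    linarith
  have hnR : ((n : ℝ)) ≠ 0 := Nat.cast_ne_zero.2 hn.ne'
  have hnC : ((n : ℂ)) ≠ 0 := Nat.cast_ne_zero.2 hn.ne'
  have hpt : ∀ ω, ‖alphaHat c pX φ f X Z T n j ω - coeff D f φ j‖ ^ 2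
      = ((n : ℝ)⁻¹) ^ 2 * ((SU ω - n * (coeff D f φ j).re) ^ 2
        + (SV ω - n * (coeff D f φ j).im) ^ 2) := by
    intro ω
    have hsum : alphaHat c pX φ f X Z T n j ω
        = (n : ℂ)⁻¹ * ∑ i ∈ Finset.range n, Y i ω := by
      rw [alphaHat, Finset.mul_sum, Finset.mul_sum]
      refine Finset.sum_congr rfl fun i _ => ?_
      rw [hYdef]
      show (c : ℂ) / (n : ℂ) * ((starRingEnd ℂ) (φ j (X i ω)) / (pX (X i ω) : ℂ)
          * (obsB f X Z T i ω : ℂ))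
        = (n : ℂ)⁻¹ * ((c : ℂ) * (starRingEnd ℂ) (φ j (X i ω)) / (pX (X i ω) : ℂ)
          * (sgn' (f (X i ω) + Z i ω - T i ω) : ℂ))
      rw [obsB]
      ring
    have hdiff : alphaHat c pX φ f X Z T n j ω - coeff D f φ j
        = (n : ℂ)⁻¹ * ((∑ i ∈ Finset.range n, Y i ω) - (n : ℂ) * coeff D f φ j) := by
      rw [hsum, mul_sub, ← mul_assoc, inv_mul_cancel₀ hnC, one_mul]
    rw [hdiff, norm_mul, mul_pow, norm_inv, Complex.norm_natCast]
    congr 1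
    rw [Complex.sq_norm, Complex.normSq_apply, Complex.sub_re,
      Complex.sub_im, Complex.re_sum, Complex.im_sum, hSUapp ω, hSVapp ω]
    simp only [Complex.mul_re, Complex.mul_im, Complex.natCast_re, Complex.natCast_im]
    ring
  have hIsqU : Integrable (fun ω => (SU ω - n * (coeff D f φ j).re) ^ 2) P := by
    have := (hSU2.sub (memLp_const ((n : ℝ) * (coeff D f φ j).re))).integrable_sq
    simpa only [Pi.sub_apply] using this
  have hIsqV : Integrable (fun ω => (SV ω - n * (coeff D f φ j).im) ^ 2) P := by
    have := (hSV2.sub (memLp_const ((n : ℝ) * (coeff D f φ j).im))).integrable_sq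
    simpa only [Pi.sub_apply] using this
  calc (∫ ω, ‖alphaHat c pX φ f X Z T n j ω - coeff D f φ j‖ ^ 2 ∂P)
      = ∫ ω, ((n : ℝ)⁻¹) ^ 2 * ((SU ω - n * (coeff D f φ j).re) ^ 2
          + (SV ω - n * (coeff D f φ j).im) ^ 2) ∂P :=
        integral_congr_ae (.of_forall hpt)
    _ = ((n : ℝ)⁻¹) ^ 2 * ((∫ ω, (SU ω - n * (coeff D f φ j).re) ^ 2 ∂P)
          + ∫ ω, (SV ω - n * (coeff D f φ j).im) ^ 2 ∂P) := by
        rw [integral_const_mul]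
        congr 1
        exact integral_add hIsqU hIsqV
    _ = ((n : ℝ)⁻¹) ^ 2 * (variance SU P + variance SV P) := by
        rw [hvar_eqU, hvar_eqV]
    _ = ((n : ℝ)⁻¹) ^ 2
          * ∑ i ∈ Finset.range n, (variance (U i) P + variance (V i) P) := by
        rw [hvarU, hvarV, Finset.sum_add_distrib]
    _ ≤ ((n : ℝ)⁻¹) ^ 2 * ∑ i ∈ Finset.range n, c ^ 2 * I := by
        refine mul_le_mul_of_nonneg_left (Finset.sum_le_sum fun i _ => hvar_le i)
          (by positivity)
    _ = c ^ 2 / n * I := by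
        rw [Finset.sum_const, Finset.card_range, nsmul_eq_mul]
        field_simp
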